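/- Let D be an invertible multiplication operator on L^p(X,μ), 1 ≤ p < ∞, and let A be a bounded operator on L^p(X,μ). Then ‖A‖² ≤ ‖AD‖·‖AD⁻¹‖. -/

import Mathlib

open MeasureTheory ENNReal

section helpers

variable {X : Type*} [MeasurableSpace X] {μ : Measure X} {p : ℝ≥0∞} [Fact (1 ≤ p)]

/-- Multiplying an `Lp` function by a bounded a.e.-strongly-measurable function stays in `Lp`. -/
lemma aux_memLp (f : Lp ℂ p μ) {w : X → ℂ} (hw : AEStronglyMeasurable w μ) {K : ℝ}
    (hK : ∀ x, ‖w x‖ ≤ K) : MemLp (fun x => w x * f x) p μ := by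
  refine ⟨hw.mul (Lp.aestronglyMeasurable f), ?_⟩
  have hb : ∀ x, ‖w x * (f : X → ℂ) x‖ ≤ ‖K • (f : X → ℂ) x‖ := by
    intro x
    rw [norm_mul, norm_smul, Real.norm_eq_abs]
    exact mul_le_mul_of_nonneg_right ((hK x).trans (le_abs_self K)) (norm_nonneg _)
  calc eLpNorm (fun x => w x * f x) p μ ≤ eLpNorm (fun x => K • (f : X → ℂ) x) p μ :=
        eLpNorm_mono hb
    _ < ∞ := ((Lp.memLp f).const_smul K).2

/-- Norm bound for an `Lp` element dominated a.e. by `K * ‖f x‖`. -/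
lemma aux_norm_le (f : Lp ℂ p μ) (ξ : Lp ℂ p μ) {K : ℝ} (hK0 : 0 ≤ K)
    (h : ∀ᵐ x ∂μ, ‖(ξ : X → ℂ) x‖ ≤ K * ‖(f : X → ℂ) x‖) : ‖ξ‖ ≤ K * ‖f‖ := by
  rw [Lp.norm_def, Lp.norm_def]
  have h1 : eLpNorm (ξ : X → ℂ) p μ ≤ eLpNorm (fun x => K • (f : X → ℂ) x) p μ := by
    refine eLpNorm_mono_ae (h.mono fun x hx => ?_)
    rwa [norm_smul, Real.norm_eq_abs, abs_of_nonneg hK0]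
  have h2 : eLpNorm (fun x => K • (f : X → ℂ) x) p μ = ‖K‖₊ • eLpNorm (f : X → ℂ) p μ :=
    eLpNorm_const_smul K _ p μ
  rw [h2] at h1
  calc (eLpNorm (ξ : X → ℂ) p μ).toReal
      ≤ ((‖K‖₊ : ℝ≥0∞) * eLpNorm (f : X → ℂ) p μ).toReal := by
        refine ENNReal.toReal_mono ?_ h1
        exact ENNReal.mul_ne_top ENNReal.coe_ne_top (Lp.eLpNorm_ne_top f)
    _ = K * (eLpNorm (f : X → ℂ) p μ).toReal := by
        rw [ENNReal.toReal_mul, ENNReal.coe_toReal, coe_nnnorm, Real.norm_eq_abs,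
          abs_of_nonneg hK0]

/-- Norm equality for `Lp` elements with a.e. equal pointwise norms. -/
lemma aux_norm_eq (f ξ : Lp ℂ p μ)
    (h : ∀ᵐ x ∂μ, ‖(ξ : X → ℂ) x‖ = ‖(f : X → ℂ) x‖) : ‖ξ‖ = ‖f‖ := by
  rw [Lp.norm_def, Lp.norm_def, eLpNorm_congr_norm_ae h]

end helpers

open Topology

set_option maxHeartbeats 1600000

/-- If `D` is an invertible multiplication operator on `L^p(X, μ)`, `1 ≤ p < ∞`
(multiplication by an `L^∞` function bounded away from zero, with inverse `Dinv`
the multiplication by the reciprocal function), then `‖A‖² ≤ ‖AD‖ ‖AD⁻¹‖`. -/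
theorem sq_norm_le_norm_mul_right
    {X : Type*} [MeasurableSpace X] (μ : Measure X) [SigmaFinite μ]
    (p : ℝ≥0∞) [Fact (1 ≤ p)] (hp : p ≠ ∞)
    (D Dinv : Lp ℂ p μ →L[ℂ] Lp ℂ p μ) (d : X → ℂ)
    (hbdd : ∃ C, ∀ᵐ x ∂μ, ‖d x‖ ≤ C)
    (hbelow : ∃ ε > (0 : ℝ), ∀ᵐ x ∂μ, ε ≤ ‖d x‖)
    (hD : ∀ f : Lp ℂ p μ, (D f : X → ℂ) =ᵐ[μ] fun x => d x * f x)
    (hDinv : ∀ f : Lp ℂ p μ, (Dinv f : X → ℂ) =ᵐ[μ] fun x => (d x)⁻¹ * f x)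
    (A : Lp ℂ p μ →L[ℂ] Lp ℂ p μ) :
    ‖A‖ ^ 2 ≤ ‖A.comp D‖ * ‖A.comp Dinv‖ := by
  obtain ⟨C, hC⟩ := hbdd
  obtain ⟨ε, hε, hεd⟩ := hbelow
  set C' : ℝ := max C ε with hC'def
  have hεC' : ε ≤ C' := le_max_right _ _
  have hC'pos : 0 < C' := lt_of_lt_of_le hε hεC'
  -- `d` is a.e.-measurable
  have hdm : AEMeasurable d μ := by
    have hind : ∀ n : ℕ,
        AEMeasurable (fun x => d x * (spanningSets μ n).indicator (fun _ => (1:ℂ)) x) μ := by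
      intro n
      have hmem : MemLp ((spanningSets μ n).indicator (fun _ => (1:ℂ))) p μ :=
        memLp_indicator_const p (measurableSet_spanningSets μ n) 1
          (Or.inr (measure_spanningSets_lt_top μ n).ne)
      have h1 := hD (hmem.toLp _)
      have h2 := hmem.coeFn_toLp
      have h3 : (D (hmem.toLp _) : X → ℂ) =ᵐ[μ]
          fun x => d x * (spanningSets μ n).indicator (fun _ => (1:ℂ)) x := by
        filter_upwards [h1, h2] with x hx hx2
        rw [hx, hx2]
      exact (Lp.aestronglyMeasurable (D (hmem.toLp _))).aemeasurable.congr h3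
    apply aemeasurable_of_tendsto_metrizable_ae' hind
    refine Filter.Eventually.of_forall fun x => ?_
    have hx : x ∈ ⋃ n, spanningSets μ n := by rw [iUnion_spanningSets]; trivial
    obtain ⟨n, hn⟩ := Set.mem_iUnion.mp hx
    refine tendsto_const_nhds.congr' ?_
    filter_upwards [Filter.eventually_ge_atTop n] with m hm
    have : x ∈ spanningSets μ m := monotone_spanningSets μ hm hn
    simp [Set.indicator_of_mem this]
  -- measurable truncation `b` of `d`, bounded above and below everywhere
  set d' : X → ℂ := hdm.mk d with hd'def
  set b : X → ℂ := fun x => if ε ≤ ‖d' x‖ ∧ ‖d' x‖ ≤ C' then d' x else (ε : ℂ) with hbdef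
  have hbm : Measurable b := by
    refine Measurable.ite ?_ hdm.measurable_mk measurable_const
    exact (measurableSet_le measurable_const hdm.measurable_mk.norm).inter
      (measurableSet_le hdm.measurable_mk.norm measurable_const)
  have hb_lb : ∀ x, ε ≤ ‖b x‖ := by
    intro x
    by_cases h : ε ≤ ‖d' x‖ ∧ ‖d' x‖ ≤ C'
    · simp only [hbdef, if_pos h]; exact h.1
    · simp only [hbdef, if_neg h, Complex.norm_real, Real.norm_eq_abs, abs_of_pos hε, le_refl]
  have hb_ub : ∀ x, ‖b x‖ ≤ C' := by
    intro x
    by_cases h : ε ≤ ‖d' x‖ ∧ ‖d' x‖ ≤ C'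
    · simp only [hbdef, if_pos h]; exact h.2
    · simp only [hbdef, if_neg h, Complex.norm_real, Real.norm_eq_abs, abs_of_pos hε]
      exact hεC'
  have hb_pos : ∀ x, (0:ℝ) < ‖b x‖ := fun x => lt_of_lt_of_le hε (hb_lb x)
  have hb_ne : ∀ x, b x ≠ 0 := fun x hx => by
    have := hb_pos x; rw [hx, norm_zero] at this; exact lt_irrefl _ this
  have hbd : b =ᵐ[μ] d := by
    filter_upwards [hdm.ae_eq_mk, hC, hεd] with x hx1 hx2 hx3
    have hcond : ε ≤ ‖d' x‖ ∧ ‖d' x‖ ≤ C' := by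
      rw [hd'def] at *
      constructor
      · rw [← hx1]; exact hx3
      · rw [← hx1]; exact hx2.trans (le_max_left _ _)
    simp only [hbdef, if_pos hcond, hd'def, ← hx1]
    exact if_pos ⟨hx3, hx2.trans (le_max_left _ _)⟩
  -- logarithm of |b| and its uniform bound
  set L : X → ℝ := fun x => Real.log ‖b x‖ with hLdef
  set Λ : ℝ := max |Real.log ε| |Real.log C'| with hΛdef
  have hΛ0 : 0 ≤ Λ := le_trans (abs_nonneg _) (le_max_left _ _)
  have hLm : Measurable L := hbm.norm.log
  have hL_bound : ∀ x, |L x| ≤ Λ := by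
    intro x
    have h1 : Real.log ε ≤ L x := Real.log_le_log hε (hb_lb x)
    have h2 : L x ≤ Real.log C' := Real.log_le_log (hb_pos x) (hb_ub x)
    rw [abs_le]
    constructor
    · exact le_trans (neg_le_neg (le_max_left _ _)) (le_trans (neg_abs_le _) h1)
    · exact h2.trans (le_trans (le_abs_self _) (le_max_right _ _))
  have hexpL : ∀ x, Real.exp (L x) = ‖b x‖ := fun x => Real.exp_log (hb_pos x)
  -- the multiplier family
  set m : ℂ → X → ℂ := fun z x => Complex.exp ((2 * L x : ℝ) * z) / (‖b x‖ : ℂ) with hmdef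
  have hLm2 : Measurable fun x => ((2 * L x : ℝ) : ℂ) :=
    Complex.measurable_ofReal.comp (hLm.const_mul 2)
  have hnb0 : ∀ x, (‖b x‖ : ℂ) ≠ 0 := fun x =>
    Complex.ofReal_ne_zero.mpr (ne_of_gt (hb_pos x))
  have hm_meas : ∀ z, AEStronglyMeasurable (m z) μ := fun z =>
    (((hLm2.mul_const z).cexp).div
      (Complex.measurable_ofReal.comp hbm.norm)).aestronglyMeasurable
  have hm_norm : ∀ z x, ‖m z x‖ = Real.exp (2 * L x * z.re) / ‖b x‖ := by
    intro z x
    simp only [hmdef]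
    rw [norm_div, Complex.norm_exp]
    congr 1
    · congr 1
      exact Complex.re_ofReal_mul _ _
    · rw [Complex.norm_real, Real.norm_eq_abs, abs_of_nonneg (norm_nonneg _)]
  have hm_bdd : ∀ z x, ‖m z x‖ ≤ Real.exp (2 * Λ * |z.re|) / ε := by
    intro z x
    rw [hm_norm]
    refine div_le_div₀ (Real.exp_nonneg _) ?_ hε (hb_lb x)
    refine Real.exp_le_exp.mpr ?_
    calc 2 * L x * z.re ≤ |2 * L x * z.re| := le_abs_self _
      _ = 2 * |L x| * |z.re| := by rw [abs_mul, abs_mul, abs_two]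
      _ ≤ 2 * Λ * |z.re| := by
          have := hL_bound x
          have h0 : (0:ℝ) ≤ |z.re| := abs_nonneg _
          nlinarith
  -- suffices to bound `‖A f‖` for every `f`
  have key : ∀ f : Lp ℂ p μ,
      ‖A f‖ ≤ Real.sqrt (‖A.comp D‖ * ‖A.comp Dinv‖) * ‖f‖ := by
    intro f
    -- the analytic family `T z = toLp (m z * f)`
    have hmemT : ∀ z, MemLp (fun x => m z x * f x) p μ :=
      fun z => aux_memLp f (hm_meas z) (hm_bdd z)
    set T : ℂ → Lp ℂ p μ := fun z => (hmemT z).toLp _ with hTdef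
    have hT_coe : ∀ z, (T z : X → ℂ) =ᵐ[μ] fun x => m z x * f x :=
      fun z => MemLp.coeFn_toLp _
    -- the derivative family
    have hm'_meas : ∀ z, AEStronglyMeasurable (fun x => ((2 * L x : ℝ) : ℂ) * m z x) μ :=
      fun z => hLm2.aestronglyMeasurable.mul (hm_meas z)
    have hm'_bdd : ∀ z x, ‖((2 * L x : ℝ) : ℂ) * m z x‖ ≤
        (2 * Λ) * (Real.exp (2 * Λ * |z.re|) / ε) := by
      intro z x
      rw [norm_mul, Complex.norm_real, Real.norm_eq_abs, abs_mul, abs_two]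
      have h1 := hm_bdd z x
      have h2 := hL_bound x
      have h3 : (0:ℝ) ≤ ‖m z x‖ := norm_nonneg _
      nlinarith
    have hmemT' : ∀ z, MemLp (fun x => (((2 * L x : ℝ) : ℂ) * m z x) * f x) p μ :=
      fun z => aux_memLp f (hm'_meas z) (hm'_bdd z)
    set T' : ℂ → Lp ℂ p μ := fun z => (hmemT' z).toLp _ with hT'def
    have hT'_coe : ∀ z, (T' z : X → ℂ) =ᵐ[μ]
        fun x => (((2 * L x : ℝ) : ℂ) * m z x) * f x := fun z => MemLp.coeFn_toLp _
    -- differentiability of T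
    have hTderiv : ∀ z, HasDerivAt T (T' z) z := by
      intro z
      rw [hasDerivAt_iff_isLittleO]
      set Kz : ℝ := Real.exp (2 * Λ * |z.re|) / ε with hKzdef
      have hKz0 : 0 ≤ Kz := div_nonneg (Real.exp_nonneg _) hε.le
      set Mc : ℝ := 4 * Λ ^ 2 * Kz with hMcdef
      have hMc0 : 0 ≤ Mc := by positivity
      have hball : ∀ w : ℂ, ‖w - z‖ ≤ 1 / (2 * Λ + 1) →
          ‖T w - T z - (w - z) • T' z‖ ≤ (Mc * ‖w - z‖ ^ 2) * ‖f‖ := by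
        intro w hw
        refine aux_norm_le f _ (by positivity) ?_
        filter_upwards [Lp.coeFn_sub (T w - T z) ((w - z) • T' z),
          Lp.coeFn_sub (T w) (T z), Lp.coeFn_smul (w - z) (T' z),
          hT_coe w, hT_coe z, hT'_coe z] with x h1 h2 h3 h4 h5 h6
        rw [h1, Pi.sub_apply, h2, Pi.sub_apply, h3, Pi.smul_apply, h4, h5, h6]
        have hxeq : m w x * (f : X → ℂ) x - m z x * (f : X → ℂ) x
            - (w - z) • ((((2 * L x : ℝ) : ℂ) * m z x) * (f : X → ℂ) x)
            = (m w x - m z x - (w - z) * (((2 * L x : ℝ) : ℂ) * m z x)) * (f : X → ℂ) x := by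
          simp only [smul_eq_mul]; ring
        rw [hxeq, norm_mul]
        refine mul_le_mul_of_nonneg_right ?_ (norm_nonneg _)
        -- main pointwise exponential estimate
        have hfact : m w x - m z x - (w - z) * (((2 * L x : ℝ) : ℂ) * m z x)
            = m z x * (Complex.exp (((2 * L x : ℝ) : ℂ) * (w - z)) - 1
              - ((2 * L x : ℝ) : ℂ) * (w - z)) := by
          have hadd : Complex.exp (((2 * L x : ℝ) : ℂ) * w)
              = Complex.exp (((2 * L x : ℝ) : ℂ) * z)
                * Complex.exp (((2 * L x : ℝ) : ℂ) * (w - z)) := by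
            rw [← Complex.exp_add]; congr 1; ring
          have hb0 := hnb0 x
          simp only [hmdef]
          rw [hadd]
          field_simp
        rw [hfact, norm_mul]
        have hw' : 2 * Λ * ‖w - z‖ ≤ 1 := by
          have h2pos : (0:ℝ) < 2 * Λ + 1 := by linarith
          have h5 : 2 * Λ * ‖w - z‖ ≤ 2 * Λ * (1 / (2 * Λ + 1)) :=
            mul_le_mul_of_nonneg_left hw (by linarith)
          refine h5.trans ?_
          rw [mul_one_div, div_le_one h2pos]
          linarith
        have harg : ‖((2 * L x : ℝ) : ℂ) * (w - z)‖ ≤ 1 := by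
          rw [norm_mul, Complex.norm_real, Real.norm_eq_abs, abs_mul, abs_two]
          have h2 := hL_bound x
          have h3 : (0:ℝ) ≤ ‖w - z‖ := norm_nonneg _
          nlinarith
        have hexp : ‖Complex.exp (((2 * L x : ℝ) : ℂ) * (w - z)) - 1
            - ((2 * L x : ℝ) : ℂ) * (w - z)‖ ≤ ‖((2 * L x : ℝ) : ℂ) * (w - z)‖ ^ 2 :=
          Complex.norm_exp_sub_one_sub_id_le harg
        have hargsq : ‖((2 * L x : ℝ) : ℂ) * (w - z)‖ ^ 2 ≤ 4 * Λ ^ 2 * ‖w - z‖ ^ 2 := by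
          rw [norm_mul, Complex.norm_real, Real.norm_eq_abs, abs_mul, abs_two]
          have h2 := hL_bound x
          have h6 : |L x| ^ 2 ≤ Λ ^ 2 := pow_le_pow_left₀ (abs_nonneg _) h2 2
          nlinarith [sq_nonneg ‖w - z‖]
        calc ‖m z x‖ * ‖Complex.exp (((2 * L x : ℝ) : ℂ) * (w - z)) - 1
              - ((2 * L x : ℝ) : ℂ) * (w - z)‖
            ≤ Kz * (4 * Λ ^ 2 * ‖w - z‖ ^ 2) := by
              refine mul_le_mul (hm_bdd z x) (hexp.trans hargsq) (norm_nonneg _) hKz0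
          _ = Mc * ‖w - z‖ ^ 2 := by rw [hMcdef]; ring
      -- deduce littleO
      rw [Asymptotics.isLittleO_iff]
      intro c hc
      have hr1 : (0:ℝ) < 1 / (2 * Λ + 1) := by positivity
      have hr2 : (0:ℝ) < c / (Mc * ‖f‖ + 1) := by positivity
      have hmem : Metric.ball z (min (1 / (2 * Λ + 1)) (c / (Mc * ‖f‖ + 1))) ∈ 𝓝 z :=
        Metric.ball_mem_nhds z (lt_min hr1 hr2)
      filter_upwards [hmem] with w hw
      rw [Metric.mem_ball, dist_eq_norm] at hw
      have hw1 : ‖w - z‖ ≤ 1 / (2 * Λ + 1) := (hw.trans_le (min_le_left _ _)).le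
      have hw2 : ‖w - z‖ ≤ c / (Mc * ‖f‖ + 1) := (hw.trans_le (min_le_right _ _)).le
      calc ‖T w - T z - (w - z) • T' z‖ ≤ (Mc * ‖w - z‖ ^ 2) * ‖f‖ := hball w hw1
        _ = (Mc * ‖f‖ * ‖w - z‖) * ‖w - z‖ := by ring
        _ ≤ c * ‖w - z‖ := by
            refine mul_le_mul_of_nonneg_right ?_ (norm_nonneg _)
            have h0 : (0:ℝ) ≤ Mc * ‖f‖ := by positivity
            calc Mc * ‖f‖ * ‖w - z‖ ≤ (Mc * ‖f‖ + 1) * (c / (Mc * ‖f‖ + 1)) := by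
                  refine mul_le_mul (by linarith) hw2 (norm_nonneg _) (by linarith)
              _ = c := by field_simp
    -- the function for the three lines theorem
    set F : ℂ → Lp ℂ p μ := fun z => A (T z) with hFdef
    have hFdiff : Differentiable ℂ F :=
      A.differentiable.comp (fun z => (hTderiv z).differentiableAt)
    have hFdd : DiffContOnCl ℂ F (Complex.HadamardThreeLines.verticalStrip 0 1) :=
      hFdiff.diffContOnCl
    have hB : BddAbove ((norm ∘ F) ''
        (Complex.HadamardThreeLines.verticalClosedStrip 0 1)) := by
      refine ⟨‖A‖ * ((Real.exp (2 * Λ) / ε) * ‖f‖), ?_⟩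
      rintro y ⟨w, hw, rfl⟩
      simp only [Function.comp_apply, hFdef]
      have hTw : ‖T w‖ ≤ (Real.exp (2 * Λ) / ε) * ‖f‖ := by
        refine aux_norm_le f _ (by positivity) ?_
        filter_upwards [hT_coe w] with x hx
        rw [hx, norm_mul]
        refine mul_le_mul_of_nonneg_right ((hm_bdd w x).trans ?_) (norm_nonneg _)
        have hwre : |w.re| ≤ 1 := by
          have h1 := hw.1
          have h2 := hw.2
          rw [abs_le]; constructor <;> linarith
        rw [div_le_div_iff_of_pos_right hε]
        refine Real.exp_le_exp.mpr ?_
        nlinarith [abs_nonneg w.re]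
      calc ‖A (T w)‖ ≤ ‖A‖ * ‖T w‖ := A.le_opNorm _
        _ ≤ ‖A‖ * ((Real.exp (2 * Λ) / ε) * ‖f‖) :=
            mul_le_mul_of_nonneg_left hTw (norm_nonneg _)
    -- boundary estimate on `re = 0`
    have ha0 : ∀ w ∈ Complex.re ⁻¹' {(0:ℝ)}, ‖F w‖ ≤ ‖A.comp Dinv‖ * ‖f‖ := by
      intro w hw
      have hwre : w.re = 0 := hw
      set v : X → ℂ := fun x => Complex.exp ((2 * L x : ℝ) * w) * (b x / (‖b x‖ : ℂ))
        with hvdef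
      have hv_meas : AEStronglyMeasurable v μ := Measurable.aestronglyMeasurable <|
        ((hLm2.mul_const w).cexp).mul
          (hbm.div (Complex.measurable_ofReal.comp hbm.norm))
      have hv_norm : ∀ x, ‖v x‖ = 1 := by
        intro x
        simp only [hvdef]
        rw [norm_mul, norm_div, Complex.norm_exp,
          Complex.re_ofReal_mul, hwre, mul_zero, Real.exp_zero, Complex.norm_real,
          Real.norm_eq_abs, abs_of_nonneg (norm_nonneg _), one_mul,
          div_self (ne_of_gt (hb_pos x))]
      have hmemG : MemLp (fun x => v x * f x) p μ :=
        aux_memLp f hv_meas (fun x => (hv_norm x).le)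
      set G : Lp ℂ p μ := hmemG.toLp _ with hGdef
      have hG_coe : (G : X → ℂ) =ᵐ[μ] fun x => v x * f x := hmemG.coeFn_toLp
      have hTG : T w = Dinv G := by
        refine Lp.ext ?_
        filter_upwards [hT_coe w, hDinv G, hG_coe, hbd] with x hx1 hx2 hx3 hx4
        rw [hx1, hx2, hx3, ← hx4]
        have hb0 := hb_ne x
        have hnbx := hnb0 x
        simp only [hmdef, hvdef]
        field_simp
      have hFw : F w = (A.comp Dinv) G := by
        simp only [hFdef, hTG, ContinuousLinearMap.comp_apply]
      rw [hFw]
      have hGnorm : ‖G‖ = ‖f‖ := by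
        refine aux_norm_eq f G ?_
        filter_upwards [hG_coe] with x hx
        rw [hx, norm_mul, hv_norm, one_mul]
      calc ‖(A.comp Dinv) G‖ ≤ ‖A.comp Dinv‖ * ‖G‖ := (A.comp Dinv).le_opNorm G
        _ = ‖A.comp Dinv‖ * ‖f‖ := by rw [hGnorm]
    -- boundary estimate on `re = 1`
    have ha1 : ∀ w ∈ Complex.re ⁻¹' {(1:ℝ)}, ‖F w‖ ≤ ‖A.comp D‖ * ‖f‖ := by
      intro w hw
      have hwre : w.re = 1 := hw
      set v : X → ℂ := fun x => Complex.exp ((2 * L x : ℝ) * w) / ((‖b x‖ : ℂ) * b x)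
        with hvdef
      have hv_meas : AEStronglyMeasurable v μ := Measurable.aestronglyMeasurable <|
        ((hLm2.mul_const w).cexp).div
          ((Complex.measurable_ofReal.comp hbm.norm).mul hbm)
      have hexp2 : ∀ x, Real.exp (2 * L x) = ‖b x‖ * ‖b x‖ := by
        intro x
        rw [two_mul, Real.exp_add, hexpL]
      have hv_norm : ∀ x, ‖v x‖ = 1 := by
        intro x
        simp only [hvdef]
        rw [norm_div, Complex.norm_exp,
          Complex.re_ofReal_mul, hwre, mul_one, norm_mul, Complex.norm_real,
          Real.norm_eq_abs, abs_of_nonneg (norm_nonneg _), hexp2,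
          div_self (mul_pos (hb_pos x) (hb_pos x)).ne']
      have hmemG : MemLp (fun x => v x * f x) p μ :=
        aux_memLp f hv_meas (fun x => (hv_norm x).le)
      set G : Lp ℂ p μ := hmemG.toLp _ with hGdef
      have hG_coe : (G : X → ℂ) =ᵐ[μ] fun x => v x * f x := hmemG.coeFn_toLp
      have hTG : T w = D G := by
        refine Lp.ext ?_
        filter_upwards [hT_coe w, hD G, hG_coe, hbd] with x hx1 hx2 hx3 hx4
        rw [hx1, hx2, hx3, ← hx4]
        have hb0 := hb_ne x
        have hnbx := hnb0 x
        simp only [hmdef, hvdef]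
        field_simp
      have hFw : F w = (A.comp D) G := by
        simp only [hFdef, hTG, ContinuousLinearMap.comp_apply]
      rw [hFw]
      have hGnorm : ‖G‖ = ‖f‖ := by
        refine aux_norm_eq f G ?_
        filter_upwards [hG_coe] with x hx
        rw [hx, norm_mul, hv_norm, one_mul]
      calc ‖(A.comp D) G‖ ≤ ‖A.comp D‖ * ‖G‖ := (A.comp D).le_opNorm G
        _ = ‖A.comp D‖ * ‖f‖ := by rw [hGnorm]
    -- value at the center
    have hcenter : T ((2⁻¹ : ℝ) : ℂ) = f := by
      refine Lp.ext ?_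
      filter_upwards [hT_coe ((2⁻¹ : ℝ) : ℂ)] with x hx
      rw [hx]
      have h1 : ((2 * L x : ℝ) : ℂ) * ((2⁻¹ : ℝ) : ℂ) = ((L x : ℝ) : ℂ) := by
        push_cast; ring
      have h2 : m ((2⁻¹ : ℝ) : ℂ) x = 1 := by
        simp only [hmdef]
        rw [h1, ← Complex.ofReal_exp, hexpL]
        exact div_self (hnb0 x)
      rw [h2, one_mul]
    -- apply the Hadamard three lines theorem
    have hz : ((2⁻¹ : ℝ) : ℂ) ∈ Complex.HadamardThreeLines.verticalClosedStrip 0 1 := by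
      simp only [Complex.HadamardThreeLines.verticalClosedStrip, Set.mem_preimage,
        Complex.ofReal_re, Set.mem_Icc]
      norm_num
    have hHad := Complex.HadamardThreeLines.norm_le_interp_of_mem_verticalClosedStrip₀₁'
      F hz hFdd hB ha0 ha1
    rw [Complex.ofReal_re] at hHad
    have hF0 : F ((2⁻¹ : ℝ) : ℂ) = A f := by
      simp only [hFdef, hcenter]
    rw [hF0] at hHad
    have h12 : (1 : ℝ) - 2⁻¹ = 2⁻¹ := by norm_num
    rw [h12] at hHad
    have hc0 : (0:ℝ) ≤ ‖A.comp Dinv‖ * ‖f‖ := mul_nonneg (norm_nonneg _) (norm_nonneg _)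
    have hc1 : (0:ℝ) ≤ ‖A.comp D‖ * ‖f‖ := mul_nonneg (norm_nonneg _) (norm_nonneg _)
    calc ‖A f‖ ≤ (‖A.comp Dinv‖ * ‖f‖) ^ (2⁻¹ : ℝ) * (‖A.comp D‖ * ‖f‖) ^ (2⁻¹ : ℝ) := hHad
      _ = Real.sqrt (‖A.comp Dinv‖ * ‖f‖) * Real.sqrt (‖A.comp D‖ * ‖f‖) := by
          rw [Real.sqrt_eq_rpow, Real.sqrt_eq_rpow]
          norm_num
      _ = Real.sqrt ((‖A.comp Dinv‖ * ‖f‖) * (‖A.comp D‖ * ‖f‖)) :=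
          (Real.sqrt_mul hc0 _).symm
      _ = Real.sqrt ((‖A.comp D‖ * ‖A.comp Dinv‖) * (‖f‖ * ‖f‖)) := by ring_nf
      _ = Real.sqrt (‖A.comp D‖ * ‖A.comp Dinv‖) * ‖f‖ := by
          rw [Real.sqrt_mul (mul_nonneg (norm_nonneg _) (norm_nonneg _)),
            Real.sqrt_mul_self (norm_nonneg f)]
  -- conclude
  have hA : ‖A‖ ≤ Real.sqrt (‖A.comp D‖ * ‖A.comp Dinv‖) :=
    A.opNorm_le_bound (Real.sqrt_nonneg _) key
  calc ‖A‖ ^ 2 ≤ Real.sqrt (‖A.comp D‖ * ‖A.comp Dinv‖) ^ 2 :=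
      pow_le_pow_left₀ (norm_nonneg A) hA 2
    _ = ‖A.comp D‖ * ‖A.comp Dinv‖ :=
      Real.sq_sqrt (mul_nonneg (norm_nonneg _) (norm_nonneg _))
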